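/- Let X be a real normed space partially ordered by a nontrivial pointed convex cone C, and let A ⊆ X be a weakly compact subset. Assume that C is closed and that (C, C_α) has the strict separation property for every 0 < α < 1. If 0 ∈ Min(A, C), then for every 0 < ε < 1 there exist a natural number n_ε and a bounded base B(ε) of C such that 1/n_ε < δ_{B(ε)}, the pair (C, C_{(B(ε),1/n_ε)}) has the strict separation property, and A ∩ (−C_{(B(ε),1/n_ε)}) ⊆ A ∩ εB_X. -/

import Mathlib

open Set Metric Pointwise

namespace HenigPaper

variable {X : Type*} [NormedAddCommGroup X] [NormedSpace ℝ X]

/-- `C` is a cone: closed under multiplication by nonnegative scalars. -/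
def IsCone (C : Set X) : Prop :=
  ∀ ⦃l : ℝ⦄, 0 ≤ l → ∀ ⦃x⦄, x ∈ C → l • x ∈ C

/-- `C` is a nontrivial cone: `{0} ⊊ C ⊊ X`. -/
def NontrivialCone (C : Set X) : Prop :=
  IsCone C ∧ ({(0 : X)} : Set X) ⊂ C ∧ C ≠ Set.univ

/-- A cone is pointed if `(-C) ∩ C = {0}`. -/
def PointedCone' (C : Set X) : Prop := (-C) ∩ C = ({(0 : X)} : Set X)

/-- Convexity of a cone in the sense `C + C = C`. -/
def ConeConvex (C : Set X) : Prop := C + C = C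

/-- The strict separation property (SSP) for the pair of cones `(C, K)`. -/
def SSP (C K : Set X) : Prop :=
  (0 : X) ∉ closure (convexHull ℝ (C ∩ sphere (0 : X) 1) -
    convexHull ℝ ((frontier K ∩ sphere (0 : X) 1) ∪ {(0 : X)}))

/-- The Bishop–Phelps cone `C(f, α) = {x : f x ≥ α ‖x‖}`. -/
def BPCone (f : X →L[ℝ] ℝ) (α : ℝ) : Set X := {x : X | α * ‖x‖ ≤ f x}

/-- The sublevel set `S(f, α) = {x : f x + α ‖x‖ ≤ 0}`. -/
def Ssub (f : X →L[ℝ] ℝ) (α : ℝ) : Set X := {x : X | f x + α * ‖x‖ ≤ 0}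

/-- `f ∈ C^#`: strictly positive functionals on `C`. -/
def StrictlyPos (C : Set X) (f : X →L[ℝ] ℝ) : Prop :=
  ∀ x ∈ C, x ≠ 0 → 0 < f x

/-- `(f, α) ∈ C^{a*}`: the augmented dual cone. -/
def MemAugDual (C : Set X) (f : X →L[ℝ] ℝ) (α : ℝ) : Prop :=
  StrictlyPos C f ∧ 0 ≤ α ∧ ∀ x ∈ C, α * ‖x‖ ≤ f x

/-- `(f, α) ∈ C^{a#}_+`. -/
def MemAugDualSharpPlus (C : Set X) (f : X →L[ℝ] ℝ) (α : ℝ) : Prop :=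
  StrictlyPos C f ∧ 0 < α ∧ ∀ x ∈ C, x ≠ 0 → α * ‖x‖ < f x

/-- `B` is a base for the cone `C`. -/
def IsBase (C B : Set X) : Prop :=
  B.Nonempty ∧ Convex ℝ B ∧ B ⊆ C ∧ (0 : X) ∉ closure B ∧
    ∀ x ∈ C, x ≠ (0 : X) → ∃! p : ℝ × X, 0 < p.1 ∧ p.2 ∈ B ∧ x = p.1 • p.2

/-- The cone `C` has a bounded base. -/
def HasBoundedBase (C : Set X) : Prop :=
  ∃ B : Set X, IsBase C B ∧ Bornology.IsBounded B

/-- The cone generated by a set `A`. -/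
def coneGen (A : Set X) : Set X := {y : X | ∃ l : ℝ, 0 ≤ l ∧ ∃ a ∈ A, y = l • a}

/-- The `ε`-conic neighbourhood `C_ε` of a cone `C`. -/
def epsCone (C : Set X) (ε : ℝ) : Set X :=
  coneGen {x : X | infDist x (C ∩ sphere (0 : X) 1) ≤ ε}

/-- `δ_B = inf {‖b‖ : b ∈ B}`. -/
noncomputable def deltaB (B : Set X) : ℝ := sInf ((fun b => ‖b‖) '' B)

/-- The Henig dilating cone `C_{(B,ε)}`. -/
def henigCone (B : Set X) (ε : ℝ) : Set X :=
  coneGen {x : X | infDist x B ≤ ε}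

/-- The set of efficient (Pareto minimal) points of `A` with respect to the cone `C`. -/
def MinSet (A C : Set X) : Set X :=
  {x ∈ A | (A - ({x} : Set X)) ∩ (-C) = ({(0 : X)} : Set X)}

/-- The set of Henig global proper efficient points of `A` with respect to `C`. -/
def GHe (A C : Set X) : Set X :=
  {x : X | ∃ K : Set X, IsCone K ∧ ConeConvex K ∧ C \ {(0 : X)} ⊆ interior K ∧
    x ∈ MinSet A K}

/-- A subset of `X` is weakly compact if it is compact in the weak topology. -/
def WeaklyCompact (A : Set X) : Prop :=
  IsCompact ((toWeakSpace ℝ X) '' A)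

end HenigPaper

open HenigPaper

variable {X : Type*} [NormedAddCommGroup X] [NormedSpace ℝ X]


section AuxLemmas

lemma mem_coneGen_of_mem {A : Set X} {x : X} (hx : x ∈ A) : x ∈ coneGen A :=
  ⟨1, zero_le_one, x, hx, (one_smul ℝ x).symm⟩

lemma coneGen_smul_mem {A : Set X} {l : ℝ} (hl : 0 ≤ l) {x : X} (hx : x ∈ coneGen A) :
    l • x ∈ coneGen A := by
  obtain ⟨m, hm, a, ha, rfl⟩ := hx
  exact ⟨l * m, mul_nonneg hl hm, a, ha, (mul_smul l m a).symm⟩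

lemma zero_mem_coneGen {A : Set X} (h : A.Nonempty) : (0 : X) ∈ coneGen A := by
  obtain ⟨a, ha⟩ := h
  exact ⟨0, le_rfl, a, ha, (zero_smul ℝ a).symm⟩

lemma coneGen_convex {A : Set X} (hA : Convex ℝ A) (hne : A.Nonempty) :
    Convex ℝ (coneGen A) := by
  rintro x ⟨l, hl, a, ha, rfl⟩ y ⟨m, hm, b, hb, rfl⟩ s t hs ht hst
  have hsl : 0 ≤ s * l := mul_nonneg hs hl
  have htm : 0 ≤ t * m := mul_nonneg ht hm
  rcases eq_or_lt_of_le (add_nonneg hsl htm) with h0 | hpos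
  · have h1 : s * l = 0 := by linarith
    have h2 : t * m = 0 := by linarith
    have : s • l • a + t • m • b = (0 : X) := by
      rw [smul_smul, smul_smul, h1, h2, zero_smul, zero_smul, add_zero]
    rw [this]; exact zero_mem_coneGen hne
  · set μ := s * l + t * m with hμ
    refine ⟨μ, hpos.le, (s * l / μ) • a + (t * m / μ) • b,
      hA ha hb (by positivity) (by positivity) (by field_simp; exact hμ.symm), ?_⟩
    rw [smul_add, smul_smul, smul_smul, smul_smul, smul_smul]
    rw [mul_div_cancel₀ _ (ne_of_gt hpos), mul_div_cancel₀ _ (ne_of_gt hpos)]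

lemma convex_infDist_le {B : Set X} (hB : Convex ℝ B) (hne : B.Nonempty) {δ : ℝ} :
    Convex ℝ {x : X | infDist x B ≤ δ} := by
  rintro x hx y hy s t hs ht hst
  rw [Set.mem_setOf_eq]
  refine le_of_forall_pos_le_add fun ε hε => ?_
  have hx' : infDist x B < δ + ε := lt_of_le_of_lt hx (by linarith)
  have hy' : infDist y B < δ + ε := lt_of_le_of_lt hy (by linarith)
  obtain ⟨bx, hbx, hdx⟩ := (infDist_lt_iff hne).1 hx'
  obtain ⟨by', hby, hdy⟩ := (infDist_lt_iff hne).1 hy'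
  have hmem : s • bx + t • by' ∈ B := hB hbx hby hs ht hst
  calc infDist (s • x + t • y) B ≤ dist (s • x + t • y) (s • bx + t • by') :=
        infDist_le_dist_of_mem hmem
    _ ≤ s * dist x bx + t * dist y by' := by
        rw [dist_eq_norm, dist_eq_norm, dist_eq_norm]
        calc ‖s • x + t • y - (s • bx + t • by')‖ = ‖s • (x - bx) + t • (y - by')‖ := by
              congr 1; module
          _ ≤ ‖s • (x - bx)‖ + ‖t • (y - by')‖ := norm_add_le _ _
          _ = s * ‖x - bx‖ + t * ‖y - by'‖ := by
              rw [norm_smul, norm_smul, Real.norm_of_nonneg hs, Real.norm_of_nonneg ht]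
    _ ≤ s * (δ + ε) + t * (δ + ε) := by
        have d1 : (0:ℝ) ≤ dist x bx := dist_nonneg
        have d2 : (0:ℝ) ≤ dist y by' := dist_nonneg
        nlinarith
    _ = δ + ε := by rw [← add_mul, hst, one_mul]

lemma smul_coneGen {A : Set X} {l : ℝ} (hl : 0 < l) : l • coneGen A = coneGen A := by
  apply Set.Subset.antisymm
  · rintro - ⟨x, hx, rfl⟩; exact coneGen_smul_mem hl.le hx
  · intro x hx
    exact ⟨l⁻¹ • x, coneGen_smul_mem (inv_nonneg.2 hl.le) hx, smul_inv_smul₀ (ne_of_gt hl) x⟩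

lemma frontier_coneGen_smul_mem {A : Set X} {l : ℝ} (hl : 0 < l) {x : X}
    (hx : x ∈ frontier (coneGen A)) : l • x ∈ frontier (coneGen A) := by
  rw [frontier, Set.mem_diff] at hx ⊢
  obtain ⟨hxc, hxi⟩ := hx
  constructor
  · have h1 : closure (l • coneGen A) = l • closure (coneGen A) :=
      closure_smul₀' (ne_of_gt hl) (coneGen A)
    rw [smul_coneGen hl] at h1
    rw [h1]
    exact Set.smul_mem_smul_set hxc
  · intro h
    have h2 : interior (l • coneGen A) = l • interior (coneGen A) :=
      interior_smul₀ (ne_of_gt hl) (coneGen A)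
    rw [smul_coneGen hl] at h2
    rw [h2] at h
    exact hxi ((Set.smul_mem_smul_set_iff₀ (ne_of_gt hl) _ x).1 h)

lemma smul_mem_interior_coneGen {A : Set X} {l : ℝ} (hl : 0 < l) {x : X}
    (hx : x ∈ interior (coneGen A)) : l • x ∈ interior (coneGen A) := by
  have h2 : interior (l • coneGen A) = l • interior (coneGen A) :=
    interior_smul₀ (ne_of_gt hl) (coneGen A)
  rw [smul_coneGen hl] at h2
  rw [h2]
  exact Set.smul_mem_smul_set hx

lemma isClosed_toWeakSpace_image {s : Set X} (hs : Convex ℝ s) (hcl : IsClosed s) :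
    IsClosed (toWeakSpace ℝ X '' s) := by
  have h := hs.toWeakSpace_closure (𝕜 := ℝ)
  rw [hcl.closure_eq] at h
  rw [h]
  exact isClosed_closure

lemma weak_eval_continuous (f : X →L[ℝ] ℝ) :
    Continuous fun w : WeakSpace ℝ X => f ((toWeakSpace ℝ X).symm w) :=
  WeakBilin.eval_continuous ((topDualPairing ℝ X).flip) f

end AuxLemmas
section SSPLemma

/-- Key lemma: SSP for the Henig dilating cone, derived from SSP for a conic neighbourhood. -/
lemma ssp_henig {C : Set X} (hcone : IsCone C)
    {c₀ : X} (hc₀ : c₀ ∈ C ∩ sphere (0:X) 1)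
    (f : X →L[ℝ] ℝ) {u : ℝ} (hu : 0 < u)
    (hf : ∀ c ∈ C ∩ sphere (0:X) 1, u < f c)
    {δ : ℝ} (hδ : 0 < δ)
    (hsep : SSP C (epsCone C (δ * u / 3))) :
    SSP C (henigCone {x : X | x ∈ C ∧ f x = 1} δ) := by
  set S1 := C ∩ sphere (0:X) 1 with hS1
  set B : Set X := {x : X | x ∈ C ∧ f x = 1} with hB
  set α : ℝ := δ * u / 3 with hα_def
  have hα : 0 < α := by positivity
  set D : Set X := {x : X | infDist x B ≤ δ} with hD
  set K : Set X := coneGen D with hK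
  have hKeq : henigCone B δ = K := rfl
  have hEeq : epsCone C α = coneGen {x : X | infDist x S1 ≤ α} := rfl
  set P : Set X := convexHull ℝ S1 with hP
  set Qα : Set X := convexHull ℝ ((frontier (epsCone C α) ∩ sphere (0:X) 1) ∪ {0}) with hQα
  -- interior facts
  have hfpos : ∀ c ∈ S1, 0 < f c := fun c hc => lt_trans hu (hf c hc)
  have F1 : ∀ c ∈ S1, ∀ w : X, ‖w - c‖ < δ * u → w ∈ interior K := by
    intro c hc w hw
    have fcpos : 0 < f c := hfpos c hc
    have hbc : (f c)⁻¹ • c ∈ B := by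
      refine ⟨hcone (inv_nonneg.2 fcpos.le) hc.1, ?_⟩
      rw [map_smul, smul_eq_mul, inv_mul_cancel₀ (ne_of_gt fcpos)]
    set U : Set X := {x : X | infDist x B < δ} with hU
    have hUopen : IsOpen U := isOpen_lt (continuous_infDist_pt B) continuous_const
    have hUK : U ⊆ K := fun x hx =>
      ⟨1, zero_le_one, x, show infDist x B ≤ δ from le_of_lt hx, (one_smul ℝ x).symm⟩
    have hw'U : (f c)⁻¹ • w ∈ U := by
      have h1 : infDist ((f c)⁻¹ • w) B ≤ dist ((f c)⁻¹ • w) ((f c)⁻¹ • c) :=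
        infDist_le_dist_of_mem hbc
      have h2 : dist ((f c)⁻¹ • w) ((f c)⁻¹ • c) = (f c)⁻¹ * ‖w - c‖ := by
        rw [dist_eq_norm, ← smul_sub, norm_smul, Real.norm_eq_abs,
          abs_of_nonneg (inv_nonneg.2 fcpos.le)]
      have h3 : (f c)⁻¹ * ‖w - c‖ < (f c)⁻¹ * (δ * u) := by
        exact mul_lt_mul_of_pos_left hw (inv_pos.2 fcpos)
      have h4 : (f c)⁻¹ * (δ * u) < δ := by
        rw [inv_mul_lt_iff₀ fcpos]
        have := hf c hc
        nlinarith
      have : infDist ((f c)⁻¹ • w) B < δ := by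
        calc infDist ((f c)⁻¹ • w) B ≤ (f c)⁻¹ * ‖w - c‖ := by rw [← h2]; exact h1
          _ < δ := lt_trans h3 h4
      exact this
    refine mem_interior.2 ⟨(f c) • U, ?_, hUopen.smul₀ (ne_of_gt fcpos), ?_⟩
    · rintro - ⟨v, hv, rfl⟩
      exact coneGen_smul_mem fcpos.le (hUK hv)
    · exact ⟨(f c)⁻¹ • w, hw'U, smul_inv_smul₀ (ne_of_gt fcpos) w⟩
  have hS1ne : S1.Nonempty := ⟨c₀, hc₀⟩
  have F2 : ∀ x, x ∈ epsCone C α → x ≠ 0 → x ∈ interior K := by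
    rintro - ⟨l, hl, w, hwα, rfl⟩ hx0
    have hl0 : 0 < l := by
      rcases lt_or_eq_of_le hl with h | h
      · exact h
      · exfalso; apply hx0; rw [← h, zero_smul]
    have : infDist w S1 < 2 * α := lt_of_le_of_lt hwα (by linarith)
    obtain ⟨c, hc, hdc⟩ := (infDist_lt_iff hS1ne).1 this
    have hwc : ‖w - c‖ < δ * u := by
      rw [dist_eq_norm] at hdc
      calc ‖w - c‖ < 2 * α := hdc
        _ < δ * u := by rw [hα_def]; nlinarith
    exact smul_mem_interior_coneGen hl0 (F1 c hc w hwc)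
  -- separation functional from hsep
  have hPQconv : Convex ℝ (P - Qα) :=
    (convex_convexHull ℝ _).sub (convex_convexHull ℝ _)
  obtain ⟨g, r, hg0, hgr⟩ := geometric_hahn_banach_point_closed
    hPQconv.closure isClosed_closure hsep
  rw [map_zero] at hg0
  have hgap : ∀ p ∈ P, ∀ q ∈ Qα, r < g p - g q := by
    intro p hp q hq
    have := hgr _ (subset_closure (Set.sub_mem_sub hp hq))
    rwa [map_sub] at this
  have h0Q : (0:X) ∈ Qα := subset_convexHull ℝ _ (Set.mem_union_right _ rfl)
  have hc₀P : c₀ ∈ P := subset_convexHull ℝ _ hc₀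
  have hgpos : ∀ p ∈ P, r < g p := by
    intro p hp
    have := hgap p hp 0 h0Q
    rwa [map_zero, sub_zero] at this
  -- the key pointwise estimate
  have key : ∀ y ∈ (frontier K ∩ sphere (0:X) 1) ∪ ({0} : Set X), ∀ p ∈ P, g y ≤ g p - r := by
    rintro y (⟨hyfr, hys⟩ | hy0)
    swap
    · intro p hp
      rw [Set.mem_singleton_iff] at hy0
      rw [hy0, map_zero]
      have := hgpos p hp
      linarith
    intro p hp
    have hyn : ‖y‖ = 1 := mem_sphere_zero_iff_norm.1 hys
    have hyne : y ≠ 0 := by intro h; rw [h, norm_zero] at hyn; norm_num at hyn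
    have hyK : y ∉ interior K := hyfr.2
    have hyα : y ∉ epsCone C α := fun hmem => hyK (F2 y hmem hyne)
    set z : ℝ → X := fun t => (1 - t) • y + t • c₀ with hz
    have hdiff : ∀ s t : ℝ, z s - z t = (t - s) • (y - c₀) := by
      intro s t
      simp only [hz]
      module
    have hyc₀ : ‖y - c₀‖ ≤ 2 := by
      have h1 : ‖c₀‖ = 1 := mem_sphere_zero_iff_norm.1 hc₀.2
      calc ‖y - c₀‖ ≤ ‖y‖ + ‖c₀‖ := norm_sub_le y c₀
        _ = 2 := by rw [hyn, h1]; norm_num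
    have hclose : ∀ w : X, ‖w - c₀‖ ≤ α → w ∈ epsCone C α := by
      intro w hw
      refine ⟨1, zero_le_one, w, ?_, (one_smul ℝ w).symm⟩
      calc infDist w S1 ≤ dist w c₀ := infDist_le_dist_of_mem hc₀
        _ ≤ α := by rwa [dist_eq_norm]
    set T : Set ℝ := {t : ℝ | t ∈ Set.Icc (0:ℝ) 1 ∧ z t ∉ epsCone C α} with hT
    have hT0 : (0:ℝ) ∈ T := by
      refine ⟨⟨le_refl 0, zero_le_one⟩, ?_⟩
      have : z 0 = y := by simp [hz]
      rwa [this]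
    have hTbdd : BddAbove T := ⟨1, fun t ht => ht.1.2⟩
    have hTsub : ∀ t ∈ T, t ≤ 1 - α / 2 := by
      intro t ht
      by_contra hcon
      push_neg at hcon
      apply ht.2
      apply hclose
      have h1 : z t - c₀ = (1 - t) • (y - c₀) := by
        have := hdiff t 1
        have hz1 : z 1 = c₀ := by simp [hz]
        rwa [hz1] at this
      rw [h1, norm_smul, Real.norm_eq_abs, abs_of_nonneg (by linarith [ht.1.2] : (0:ℝ) ≤ 1 - t)]
      nlinarith [ht.1.2]
    set ts : ℝ := sSup T with hts
    have hts0 : 0 ≤ ts := le_csSup hTbdd hT0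
    have htsu : ts ≤ 1 - α / 2 := csSup_le ⟨0, hT0⟩ hTsub
    have h1t : 0 < 1 - ts := by linarith
    set zs : X := z ts with hzs
    have hmem_gt : ∀ t : ℝ, ts < t → t ≤ 1 → z t ∈ epsCone C α := by
      intro t h1 h2
      by_contra hmem
      exact absurd (le_csSup hTbdd ⟨⟨le_trans hts0 h1.le, h2⟩, hmem⟩) (not_le.2 h1)
    have hclzs : zs ∈ closure (epsCone C α) := by
      rw [Metric.mem_closure_iff]
      intro ε hε
      set d : ℝ := min (1 - ts) (ε / 3) with hd_def
      have hd : 0 < d := lt_min h1t (by positivity)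
      have hd3 : d ≤ ε / 3 := min_le_right _ _
      have hd1 : d ≤ 1 - ts := min_le_left _ _
      refine ⟨z (ts + d), hmem_gt _ (by linarith) (by linarith), ?_⟩
      rw [dist_eq_norm, hdiff ts (ts + d), norm_smul, Real.norm_eq_abs]
      have habs : |ts + d - ts| = d := by
        rw [add_sub_cancel_left, abs_of_nonneg hd.le]
      rw [habs]
      nlinarith [norm_nonneg (y - c₀)]
    have hintzs : zs ∉ interior (epsCone C α) := by
      intro hmem
      obtain ⟨ε, hε, hball⟩ := Metric.isOpen_iff.1 isOpen_interior zs hmem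
      obtain ⟨t, htT, htgt⟩ := exists_lt_of_lt_csSup ⟨0, hT0⟩
        (show ts - ε / 3 < ts by linarith)
      have htle : t ≤ ts := le_csSup hTbdd htT
      have hzt : z t ∈ Metric.ball zs ε := by
        rw [Metric.mem_ball, dist_comm, dist_eq_norm, hdiff ts t, norm_smul, Real.norm_eq_abs]
        have habs : |t - ts| ≤ ε / 3 := by
          rw [abs_of_nonpos (by linarith)]
          linarith
        nlinarith [norm_nonneg (y - c₀), abs_nonneg (t - ts)]
      exact htT.2 (interior_subset (hball hzt))
    have hfront : zs ∈ frontier (epsCone C α) := ⟨hclzs, hintzs⟩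
    have hnorm_zs : ‖zs‖ ≤ 1 := by
      have h1 : ‖c₀‖ = 1 := mem_sphere_zero_iff_norm.1 hc₀.2
      calc ‖zs‖ ≤ ‖(1 - ts) • y‖ + ‖ts • c₀‖ := norm_add_le _ _
        _ = (1 - ts) * ‖y‖ + ts * ‖c₀‖ := by
            rw [norm_smul, norm_smul, Real.norm_eq_abs, Real.norm_eq_abs,
              abs_of_nonneg h1t.le, abs_of_nonneg hts0]
        _ = 1 := by rw [hyn, h1]; ring
    have hzsQ : zs ∈ Qα := by
      rcases eq_or_ne zs 0 with h0 | h0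
      · rw [h0]; exact h0Q
      · have hnz : 0 < ‖zs‖ := norm_pos_iff.2 h0
        have hfr : ‖zs‖⁻¹ • zs ∈ frontier (epsCone C α) := by
          rw [hEeq] at hfront ⊢
          exact frontier_coneGen_smul_mem (inv_pos.2 hnz) hfront
        have hsp : ‖zs‖⁻¹ • zs ∈ sphere (0:X) 1 := by
          rw [mem_sphere_zero_iff_norm, norm_smul, Real.norm_eq_abs,
            abs_of_nonneg (inv_nonneg.2 hnz.le), inv_mul_cancel₀ (ne_of_gt hnz)]
        have hx := subset_convexHull ℝ ((frontier (epsCone C α) ∩ sphere (0:X) 1) ∪ {0})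
          (Set.mem_union_left _ ⟨hfr, hsp⟩)
        have hcomb := (convex_convexHull ℝ ((frontier (epsCone C α) ∩ sphere (0:X) 1) ∪ {0}))
          hx h0Q (a := ‖zs‖) (b := 1 - ‖zs‖) (norm_nonneg zs) (by linarith) (by ring)
        rwa [smul_inv_smul₀ (ne_of_gt hnz), smul_zero, add_zero] at hcomb
    have e2 : r < g p - g zs := hgap p hp zs hzsQ
    have e1 : r < g c₀ - g zs := hgap c₀ hc₀P zs hzsQ
    have e3 : g zs = (1 - ts) * g y + ts * g c₀ := by
      simp only [hzs, hz, map_add, map_smul, smul_eq_mul]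
    have h4 : ts * (g zs + r) ≤ ts * g c₀ := mul_le_mul_of_nonneg_left (by linarith) hts0
    have h5 : (1 - ts) * g y ≤ (1 - ts) * g zs := by nlinarith [mul_nonneg hts0 hg0.le]
    have h6 : g y ≤ g zs := (mul_le_mul_iff_right₀ h1t).1 h5
    linarith
  -- conclude
  rw [hKeq]
  intro h0cl
  have hsub : P - convexHull ℝ ((frontier K ∩ sphere (0:X) 1) ∪ {0}) ⊆ {x : X | r ≤ g x} := by
    rintro v hv
    rw [Set.mem_sub] at hv
    obtain ⟨p, hp, q, hq, rfl⟩ := hv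
    have hVsub : (frontier K ∩ sphere (0:X) 1) ∪ ({0} : Set X) ⊆ {x : X | g x ≤ g p - r} :=
      fun y hy => key y hy p hp
    have hhull : convexHull ℝ ((frontier K ∩ sphere (0:X) 1) ∪ {0}) ⊆ {x : X | g x ≤ g p - r} :=
      convexHull_min hVsub (convex_halfSpace_le ⟨fun a b => map_add g a b,
        fun c x => map_smul g c x⟩ _)
    have hq' : g q ≤ g p - r := hhull hq
    show r ≤ g (p - q)
    rw [map_sub]
    linarith
  have := closure_minimal hsub (isClosed_le continuous_const g.continuous) h0cl
  rw [Set.mem_setOf_eq, map_zero] at this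
  linarith

end SSPLemma
section InterLemma

/-- Facts about points in the `1/n`-tube around the base. -/
lemma tube_facts {B : Set X} (f : X →L[ℝ] ℝ) {u : ℝ} (hu : 0 < u)
    (hBu : ∀ b ∈ B, ‖b‖ ≤ 1 / u) (hBf : ∀ b ∈ B, f b = 1) (hBne : B.Nonempty)
    {n : ℕ} (hn2 : (2:ℝ) ≤ (n:ℝ)) (hnf : 4 * ‖f‖ ≤ (n:ℝ))
    {w : X} (hw : infDist w B ≤ 1 / (n:ℝ)) :
    (1:ℝ)/2 ≤ f w ∧ ‖w‖ ≤ 1/u + 1 ∧ ∃ b ∈ B, ‖w - b‖ < 2/(n:ℝ) := by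
  have hn0 : (0:ℝ) < (n:ℝ) := by linarith
  have h2n : infDist w B < 2 / (n:ℝ) := lt_of_le_of_lt hw (by
    rw [div_lt_div_iff₀ hn0 hn0]; nlinarith)
  obtain ⟨b, hbB, hdb⟩ := (infDist_lt_iff hBne).1 h2n
  rw [dist_eq_norm] at hdb
  have hfb : f b = 1 := hBf b hbB
  have hbn : ‖b‖ ≤ 1/u := hBu b hbB
  have hfwb : |f w - 1| ≤ 2 * ‖f‖ / (n:ℝ) := by
    have h1 : f w - 1 = f (w - b) := by rw [map_sub, hfb]
    rw [h1]
    calc |f (w - b)| ≤ ‖f‖ * ‖w - b‖ := by simpa [Real.norm_eq_abs] using f.le_opNorm (w - b)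
      _ ≤ ‖f‖ * (2/(n:ℝ)) := by
          have := norm_nonneg f
          nlinarith
      _ = 2 * ‖f‖ / (n:ℝ) := by ring
  have hffacts : 2 * ‖f‖ / (n:ℝ) ≤ 1/2 := by
    rw [div_le_iff₀ hn0]; nlinarith [norm_nonneg f]
  refine ⟨?_, ?_, b, hbB, hdb⟩
  · have := abs_le.1 hfwb
    linarith [this.1]
  · have hw1 : ‖w‖ ≤ ‖b‖ + ‖w - b‖ := by
      have h := norm_add_le b (w - b)
      have h2 : b + (w - b) = w := by abel
      rwa [h2] at h
    calc ‖w‖ ≤ 1/u + 2/(n:ℝ) := by linarith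
      _ ≤ 1/u + 1 := by
          have : 2/(n:ℝ) ≤ 1 := by rw [div_le_one hn0]; linarith
          linarith

set_option maxHeartbeats 1000000 in
/-- If `x` is in the closure of every Henig cone `C_{(B,1/n)}`, then `x ∈ C`. -/
lemma mem_C_of_forall_mem_closure_henig {C B : Set X} (hcone : IsCone C) (h0C : (0:X) ∈ C)
    (hBC : B ⊆ C) (hBcl : IsClosed B) (hBne : B.Nonempty)
    (f : X →L[ℝ] ℝ) {u : ℝ} (hu : 0 < u)
    (hBu : ∀ b ∈ B, ‖b‖ ≤ 1 / u) (hBf : ∀ b ∈ B, f b = 1)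
    {N : ℕ} (hN2 : (2:ℝ) ≤ (N:ℝ)) (hNf : 4 * ‖f‖ ≤ (N:ℝ))
    {x : X} (hx : ∀ n : ℕ, N ≤ n → x ∈ closure (henigCone B (1/(n:ℝ)))) :
    x ∈ C := by
  set c₄ : ℝ := 2 * (1/u + 1) with hc₄
  have hc₄pos : 0 < c₄ := by positivity
  have hcast : ∀ n : ℕ, N ≤ n → (2:ℝ) ≤ (n:ℝ) ∧ 4 * ‖f‖ ≤ (n:ℝ) := by
    intro n hn
    have : (N:ℝ) ≤ (n:ℝ) := by exact_mod_cast hn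
    exact ⟨le_trans hN2 this, le_trans hNf this⟩
  have claim1 : ∀ n : ℕ, N ≤ n → ∀ v ∈ henigCone B (1/(n:ℝ)), ‖v‖ ≤ c₄ * f v := by
    rintro n hn - ⟨l, hl, w, hw, rfl⟩
    obtain ⟨hn2, hnf⟩ := hcast n hn
    obtain ⟨hfw, hwn, -⟩ := tube_facts f hu hBu hBf hBne hn2 hnf hw
    rw [norm_smul, Real.norm_eq_abs, abs_of_nonneg hl, map_smul, smul_eq_mul]
    have e1 : l * ‖w‖ ≤ l * (1/u + 1) := mul_le_mul_of_nonneg_left hwn hl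
    have e2 : l * (1/2) ≤ l * f w := mul_le_mul_of_nonneg_left hfw hl
    have e3 : c₄ * (l * (1/2)) ≤ c₄ * (l * f w) := mul_le_mul_of_nonneg_left e2 hc₄pos.le
    calc l * ‖w‖ ≤ l * (1/u + 1) := e1
      _ = c₄ * (l * (1/2)) := by rw [hc₄]; ring
      _ ≤ c₄ * (l * f w) := e3
  have claim1' : ‖x‖ ≤ c₄ * f x := by
    have hcl1 : IsClosed {v : X | ‖v‖ ≤ c₄ * f v} :=
      isClosed_le continuous_norm (continuous_const.mul f.continuous)
    have := closure_minimal (fun v hv => claim1 N le_rfl v hv) hcl1 (hx N le_rfl)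
    exact this
  rcases eq_or_ne x 0 with rfl | hx0
  · exact h0C
  · have hfx : 0 < f x := by
      have h1 : 0 < ‖x‖ := norm_pos_iff.2 hx0
      nlinarith
    set c₃ : ℝ := 4 + 4 * ‖f‖ / u with hc₃
    have hc₃pos : 0 < c₃ := by positivity
    have claim2 : ∀ n : ℕ, N ≤ n → ∀ v ∈ henigCone B (1/(n:ℝ)), v ≠ 0 →
        infDist ((f v)⁻¹ • v) B ≤ c₃ / (n:ℝ) := by
      rintro n hn - ⟨l, hl, w, hw, rfl⟩ hv0
      obtain ⟨hn2, hnf⟩ := hcast n hn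
      have hn0 : (0:ℝ) < (n:ℝ) := by linarith
      obtain ⟨hfw, hwn, b, hbB, hwb⟩ := tube_facts f hu hBu hBf hBne hn2 hnf hw
      have hl0 : 0 < l := by
        rcases lt_or_eq_of_le hl with h | h
        · exact h
        · exfalso; apply hv0; rw [← h, zero_smul]
      have hfwpos : 0 < f w := by linarith
      have heq : (f (l • w))⁻¹ • (l • w) = (f w)⁻¹ • w := by
        rw [map_smul, smul_eq_mul, smul_smul, mul_inv]
        congr 1
        field_simp
      rw [heq]
      have hkey : (f w)⁻¹ • w - b = (f w)⁻¹ • ((w - b) + (1 - f w) • b) := by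
        have hc : (f w)⁻¹ * (1 - f w) = (f w)⁻¹ - 1 := by
          field_simp
        rw [smul_add, smul_smul, hc, sub_smul, one_smul, smul_sub]
        abel
      calc infDist ((f w)⁻¹ • w) B ≤ dist ((f w)⁻¹ • w) b := infDist_le_dist_of_mem hbB
        _ = ‖(f w)⁻¹ • w - b‖ := dist_eq_norm _ _
        _ = ‖(f w)⁻¹ • ((w - b) + (1 - f w) • b)‖ := by rw [hkey]
        _ ≤ (f w)⁻¹ * (‖w - b‖ + |1 - f w| * ‖b‖) := by
            rw [norm_smul, Real.norm_eq_abs, abs_of_nonneg (inv_nonneg.2 hfwpos.le)]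
            have h1 : ‖(w - b) + (1 - f w) • b‖ ≤ ‖w - b‖ + |1 - f w| * ‖b‖ := by
              calc ‖(w - b) + (1 - f w) • b‖ ≤ ‖w - b‖ + ‖(1 - f w) • b‖ := norm_add_le _ _
                _ = ‖w - b‖ + |1 - f w| * ‖b‖ := by rw [norm_smul, Real.norm_eq_abs]
            exact mul_le_mul_of_nonneg_left h1 (inv_nonneg.2 hfwpos.le)
        _ ≤ c₃ / (n:ℝ) := by
            have hinv2 : (f w)⁻¹ ≤ 2 := by
              nlinarith [mul_inv_cancel₀ (ne_of_gt hfwpos), inv_nonneg.2 hfwpos.le]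
            have habs : |1 - f w| ≤ 2 * ‖f‖ / (n:ℝ) := by
              have h1 : 1 - f w = f (b - w) := by
                rw [map_sub, hBf b hbB]
              rw [h1]
              calc |f (b - w)| ≤ ‖f‖ * ‖b - w‖ := by simpa [Real.norm_eq_abs] using f.le_opNorm (b - w)
                _ ≤ ‖f‖ * (2/(n:ℝ)) := by
                    rw [norm_sub_rev]
                    have := norm_nonneg f
                    nlinarith
                _ = 2 * ‖f‖ / (n:ℝ) := by ring
            have hbn : ‖b‖ ≤ 1/u := hBu b hbB
            have h2 : ‖w - b‖ + |1 - f w| * ‖b‖ ≤ 2/(n:ℝ) + (2 * ‖f‖ / (n:ℝ)) * (1/u) := by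
              have habs0 : 0 ≤ |1 - f w| := abs_nonneg _
              have hbn0 : 0 ≤ ‖b‖ := norm_nonneg b
              nlinarith
            have h3 : 0 ≤ ‖w - b‖ + |1 - f w| * ‖b‖ := by positivity
            calc (f w)⁻¹ * (‖w - b‖ + |1 - f w| * ‖b‖)
                ≤ 2 * (‖w - b‖ + |1 - f w| * ‖b‖) := by nlinarith
              _ ≤ 2 * (2/(n:ℝ) + (2 * ‖f‖ / (n:ℝ)) * (1/u)) := by nlinarith
              _ = c₃ / (n:ℝ) := by rw [hc₃]; field_simp; ring
    have claim3 : ∀ n : ℕ, N ≤ n → infDist ((f x)⁻¹ • x) B ≤ c₃ / (n:ℝ) := by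
      intro n hn
      set S : Set X := henigCone B (1/(n:ℝ)) \ {0} with hS
      have hxS : x ∈ closure S := by
        have h1 : henigCone B (1/(n:ℝ)) ⊆ S ∪ {0} := by
          intro v hv
          rcases eq_or_ne v 0 with rfl | hv0
          · exact Or.inr rfl
          · exact Or.inl ⟨hv, hv0⟩
        have h2 := closure_mono h1 (hx n hn)
        rw [closure_union, closure_singleton] at h2
        rcases h2 with h | h
        · exact h
        · exact absurd h hx0
      have hcont : ContinuousAt (fun v : X => infDist ((f v)⁻¹ • v) B) x := by
        have h1 : ContinuousAt (fun v : X => (f v)⁻¹ • v) x :=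
          (f.continuous.continuousAt.inv₀ (ne_of_gt hfx)).smul continuousAt_id
        exact (continuous_infDist_pt B).continuousAt.comp h1
      haveI : (nhdsWithin x S).NeBot := mem_closure_iff_nhdsWithin_neBot.1 hxS
      refine le_of_tendsto
        (hcont.continuousWithinAt : ContinuousWithinAt (fun v : X => infDist ((f v)⁻¹ • v) B) S x) ?_
      exact eventually_nhdsWithin_of_forall (fun v hv => claim2 n hn v hv.1 hv.2)
    have hzero : infDist ((f x)⁻¹ • x) B = 0 := by
      refine le_antisymm ?_ infDist_nonneg
      refine le_of_forall_pos_le_add (fun ε hε => ?_)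
      obtain ⟨n, hn⟩ := exists_nat_gt (max (N:ℝ) (c₃/ε))
      have hnN : N ≤ n := by
        have := le_trans (le_max_left (N:ℝ) (c₃/ε)) hn.le
        exact_mod_cast this
      have hnε : c₃ / (n:ℝ) ≤ ε := by
        have h1 : c₃/ε < (n:ℝ) := lt_of_le_of_lt (le_max_right _ _) hn
        have hn0 : (0:ℝ) < (n:ℝ) := lt_of_le_of_lt (le_max_of_le_left (Nat.cast_nonneg N)) hn
        rw [div_le_iff₀ hn0]
        rw [div_lt_iff₀ hε] at h1
        nlinarith
      calc infDist ((f x)⁻¹ • x) B ≤ c₃ / (n:ℝ) := claim3 n hnN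
        _ ≤ ε := hnε
        _ ≤ 0 + ε := by linarith
    have hmem : (f x)⁻¹ • x ∈ B := by
      have h1 : (f x)⁻¹ • x ∈ closure B := (mem_closure_iff_infDist_zero hBne).2 hzero
      rwa [hBcl.closure_eq] at h1
    have : x = (f x) • ((f x)⁻¹ • x) := (smul_inv_smul₀ (ne_of_gt hfx) x).symm
    rw [this]
    exact hcone hfx.le (hBC hmem)

/-- A point of `A ∩ -C_{(B,1/n)}` with big norm has `f`-value bounded away from `0`. -/
lemma badpoint_f_le {B : Set X} (f : X →L[ℝ] ℝ) {u : ℝ} (hu : 0 < u)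
    (hBu : ∀ b ∈ B, ‖b‖ ≤ 1 / u) (hBf : ∀ b ∈ B, f b = 1) (hBne : B.Nonempty)
    {n : ℕ} (hn2 : (2:ℝ) ≤ (n:ℝ)) (hnf : 4 * ‖f‖ ≤ (n:ℝ))
    {x : X} (hx : x ∈ -(henigCone B (1/(n:ℝ)))) {ε : ℝ} (hε : 0 < ε) (hxε : ε < ‖x‖) :
    f x ≤ -(ε * u / (2 * (1 + u))) := by
  rw [Set.mem_neg] at hx
  obtain ⟨l, hl, w, hw, heq⟩ := hx
  obtain ⟨hfw, hwn, -⟩ := tube_facts f hu hBu hBf hBne hn2 hnf hw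
  have hxw : ‖x‖ = l * ‖w‖ := by
    have : ‖-x‖ = ‖l • w‖ := by rw [heq]
    rw [norm_neg] at this
    rw [this, norm_smul, Real.norm_eq_abs, abs_of_nonneg hl]
  have hl0 : ε / (1/u + 1) < l := by
    have h1 : 0 < 1/u + 1 := by positivity
    rw [div_lt_iff₀ h1]
    nlinarith [norm_nonneg w]
  have hfx : f (-x) = l * f w := by rw [heq, map_smul, smul_eq_mul]
  have h2 : ε * u / (2 * (1 + u)) ≤ l * f w := by
    have h3 : ε / (1/u + 1) = ε * u / (1 + u) := by
      field_simp
    rw [h3] at hl0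
    have h4 : 0 < 1 + u := by linarith
    have h5 : 0 < ε * u / (1 + u) := by positivity
    calc ε * u / (2 * (1 + u)) = (ε * u / (1 + u)) / 2 := by
          rw [div_div, mul_comm 2 (1+u)]
      _ ≤ l / 2 := by linarith
      _ ≤ l * f w := by nlinarith
  have : f (-x) ≥ ε * u / (2 * (1 + u)) := by rw [hfx]; linarith
  rw [map_neg] at this
  linarith

end InterLemma
lemma coneGen_mono {A A' : Set X} (h : A ⊆ A') : coneGen A ⊆ coneGen A' := by
  rintro - ⟨l, hl, a, ha, rfl⟩
  exact ⟨l, hl, a, h ha, rfl⟩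

set_option maxHeartbeats 1000000 in
/-- If `C` is closed, `(C, C_α)` has the SSP for all `0 < α < 1`, `A` is weakly
compact and `0 ∈ Min(A,C)`, then for every `0 < ε < 1` there are `n_ε ∈ ℕ` and a bounded base
`B(ε)` of `C` with `1/n_ε < δ_{B(ε)}`, `(C, C_{(B(ε),1/n_ε)})` has the SSP, and
`A ∩ (-C_{(B(ε),1/n_ε)}) ⊆ A ∩ ε B_X`. -/
theorem stmt16 (C : Set X) (hC : NontrivialCone C) (hpt : PointedCone' C)
    (hconv : ConeConvex C) (hcl : IsClosed C) (A : Set X) (hcpt : WeaklyCompact A)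
    (hssp : ∀ α : ℝ, 0 < α → α < 1 → SSP C (epsCone C α))
    (hmin : (0 : X) ∈ MinSet A C) :
    ∀ ε : ℝ, 0 < ε → ε < 1 →
      ∃ n : ℕ, 0 < n ∧ ∃ B : Set X, IsBase C B ∧ Bornology.IsBounded B ∧
        1 / (n : ℝ) < deltaB B ∧ SSP C (henigCone B (1 / (n : ℝ))) ∧
        A ∩ (-(henigCone B (1 / (n : ℝ)))) ⊆ A ∩ closedBall (0 : X) ε := by
  intro ε hε0 hε1
  have hcone : IsCone C := hC.1
  have h0C : (0:X) ∈ C := hC.2.1.1 rfl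
  obtain ⟨e, heC, he0⟩ := Set.exists_of_ssubset hC.2.1
  have hene : e ≠ 0 := fun h => he0 (by rw [h]; rfl)
  have hCconv : Convex ℝ C := by
    intro a ha b hb s t hs ht hst
    have h1 : s • a ∈ C := hcone hs ha
    have h2 : t • b ∈ C := hcone ht hb
    have h3 := Set.add_mem_add h1 h2
    rwa [hconv] at h3
  have hen : 0 < ‖e‖ := norm_pos_iff.2 hene
  set c₀ : X := ‖e‖⁻¹ • e with hc₀def
  have hc₀ : c₀ ∈ C ∩ sphere (0:X) 1 := by
    refine ⟨hcone (inv_nonneg.2 hen.le) heC, ?_⟩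
    rw [mem_sphere_zero_iff_norm, norm_smul, Real.norm_eq_abs,
      abs_of_nonneg (inv_nonneg.2 hen.le), inv_mul_cancel₀ (ne_of_gt hen)]
  set S1 : Set X := C ∩ sphere (0:X) 1 with hS1def
  -- 0 is not in the closure of the convex hull of C ∩ S
  have hP0 : (0:X) ∉ closure (convexHull ℝ S1) := by
    have hs := hssp (1/2) (by norm_num) (by norm_num)
    intro hmem
    apply hs
    have h0Q : (0:X) ∈ convexHull ℝ
        ((frontier (epsCone C (1/2)) ∩ sphere (0:X) 1) ∪ {0}) :=
      subset_convexHull ℝ _ (Set.mem_union_right _ rfl)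
    have hsub : convexHull ℝ S1 ⊆ convexHull ℝ S1 - convexHull ℝ
        ((frontier (epsCone C (1/2)) ∩ sphere (0:X) 1) ∪ {0}) := by
      intro p hp
      have h := Set.sub_mem_sub hp h0Q
      rwa [sub_zero] at h
    exact closure_mono hsub hmem
  -- Hahn-Banach functional
  obtain ⟨f, u, hfu0, hfu⟩ := geometric_hahn_banach_point_closed
    (convex_convexHull ℝ S1).closure isClosed_closure hP0
  rw [map_zero] at hfu0
  have hf : ∀ c ∈ S1, u < f c := fun c hc =>
    hfu c (subset_closure (subset_convexHull ℝ _ hc))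
  have hfC : ∀ x ∈ C, x ≠ 0 → u * ‖x‖ < f x := by
    intro x hx hx0
    have hn : 0 < ‖x‖ := norm_pos_iff.2 hx0
    have hxs : ‖x‖⁻¹ • x ∈ S1 := by
      refine ⟨hcone (inv_nonneg.2 hn.le) hx, ?_⟩
      rw [mem_sphere_zero_iff_norm, norm_smul, Real.norm_eq_abs,
        abs_of_nonneg (inv_nonneg.2 hn.le), inv_mul_cancel₀ (ne_of_gt hn)]
    have h1 := hf _ hxs
    rw [map_smul, smul_eq_mul] at h1
    have h2 : u * ‖x‖ < (‖x‖⁻¹ * f x) * ‖x‖ := by nlinarith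
    calc u * ‖x‖ < (‖x‖⁻¹ * f x) * ‖x‖ := h2
      _ = f x := by field_simp
  set B : Set X := {x : X | x ∈ C ∧ f x = 1} with hBdef
  have hBf : ∀ b ∈ B, f b = 1 := fun b hb => hb.2
  have hBC : B ⊆ C := fun b hb => hb.1
  have hBu : ∀ b ∈ B, ‖b‖ ≤ 1/u := by
    intro b hb
    rcases eq_or_ne b 0 with rfl | hb0
    · rw [norm_zero]; positivity
    · have h1 := hfC b hb.1 hb0
      rw [hb.2] at h1
      rw [le_div_iff₀ hfu0]
      nlinarith
  have hfc₀ : 0 < f c₀ := lt_trans hfu0 (hf c₀ hc₀)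
  have hBne : B.Nonempty := by
    refine ⟨(f c₀)⁻¹ • c₀, hcone (inv_nonneg.2 hfc₀.le) hc₀.1, ?_⟩
    rw [map_smul, smul_eq_mul, inv_mul_cancel₀ (ne_of_gt hfc₀)]
  have hBcl : IsClosed B :=
    hcl.inter (isClosed_eq f.continuous continuous_const)
  have hBconv : Convex ℝ B := by
    intro a ha b hb s t hs ht hst
    refine ⟨hCconv ha.1 hb.1 hs ht hst, ?_⟩
    rw [map_add, map_smul, map_smul, smul_eq_mul, smul_eq_mul, ha.2, hb.2]
    linarith
  have hc₀n : ‖c₀‖ = 1 := mem_sphere_zero_iff_norm.1 hc₀.2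
  have hfnorm : 0 < ‖f‖ := by
    have h2 := f.le_opNorm c₀
    rw [hc₀n, mul_one, Real.norm_eq_abs] at h2
    have h3 := le_abs_self (f c₀)
    linarith
  have hBlow : ∀ b ∈ B, 1/‖f‖ ≤ ‖b‖ := by
    intro b hb
    have h2 := f.le_opNorm b
    rw [Real.norm_eq_abs, hb.2, abs_one] at h2
    rw [div_le_iff₀ hfnorm]
    nlinarith
  -- B is a bounded base
  have hbase : IsBase C B := by
    refine ⟨hBne, hBconv, hBC, ?_, ?_⟩
    · intro hmem
      rw [hBcl.closure_eq] at hmem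
      have h1 := hmem.2
      rw [map_zero] at h1
      norm_num at h1
    · intro x hx hx0
      have hnx : 0 < ‖x‖ := norm_pos_iff.2 hx0
      have hfx : 0 < f x := lt_of_le_of_lt (by positivity) (hfC x hx hx0)
      refine ⟨(f x, (f x)⁻¹ • x), ⟨hfx, ⟨hcone (inv_nonneg.2 hfx.le) hx, ?_⟩,
        (smul_inv_smul₀ (ne_of_gt hfx) x).symm⟩, ?_⟩
      · rw [map_smul, smul_eq_mul, inv_mul_cancel₀ (ne_of_gt hfx)]
      · rintro ⟨l, b⟩ ⟨hl, hbB, hxe⟩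
        have hfl : f x = l := by rw [hxe, map_smul, smul_eq_mul, hbB.2, mul_one]
        have hb : b = (f x)⁻¹ • x := by
          rw [hfl, hxe, inv_smul_smul₀ (ne_of_gt (hfl ▸ hfx))]
        exact Prod.ext (hfl.symm) hb
  have hbdd : Bornology.IsBounded B :=
    (Metric.isBounded_closedBall (x := (0:X)) (r := 1/u)).subset
      (fun b hb => by rw [mem_closedBall, dist_zero_right]; exact hBu b hb)
  -- threshold
  obtain ⟨N, hN⟩ := exists_nat_gt (max (max (4*‖f‖) (u+1)) (max (‖f‖) 2))
  have hN2 : (2:ℝ) ≤ (N:ℝ) := le_of_lt (lt_of_le_of_lt (le_max_of_le_right (le_max_right _ _)) hN)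
  have hNf : 4*‖f‖ ≤ (N:ℝ) := le_of_lt (lt_of_le_of_lt (le_max_of_le_left (le_max_left _ _)) hN)
  have hNu : u + 1 ≤ (N:ℝ) := le_of_lt (lt_of_le_of_lt (le_max_of_le_left (le_max_right _ _)) hN)
  have hNnorm : ‖f‖ < (N:ℝ) := lt_of_le_of_lt (le_max_of_le_right (le_max_left _ _)) hN
  set κ : ℝ := ε * u / (2 * (1 + u)) with hκdef
  have hκ : 0 < κ := by positivity
  set j := toWeakSpace ℝ X with hjdef
  -- find the good n
  have key : ∃ n : ℕ, N ≤ n ∧ ∀ x ∈ A ∩ -(henigCone B (1/(n:ℝ))), ‖x‖ ≤ ε := by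
    by_contra hcon
    push_neg at hcon
    set Dm : ℕ → Set X :=
      fun m => (-(closure (henigCone B (1/(((N+m : ℕ)):ℝ))))) ∩ {v : X | f v ≤ -κ} with hDm
    have htube_ne : ∀ n : ℕ, ({x : X | infDist x B ≤ 1/(n:ℝ)}).Nonempty := by
      intro n
      obtain ⟨b, hb⟩ := hBne
      refine ⟨b, ?_⟩
      have h1 : infDist b B = 0 := infDist_zero_of_mem hb
      rw [Set.mem_setOf_eq, h1]
      positivity
    have hDconv : ∀ m, Convex ℝ (Dm m) := by
      intro m
      refine Convex.inter ?_ (convex_halfSpace_le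
        ⟨fun a b => map_add f a b, fun c x => map_smul f c x⟩ _)
      exact ((coneGen_convex (convex_infDist_le hBconv hBne) (htube_ne _)).closure).neg
    have hDcl : ∀ m, IsClosed (Dm m) := by
      intro m
      exact (isClosed_closure.neg).inter (isClosed_le f.continuous continuous_const)
    have hmono : ∀ m m' : ℕ, m ≤ m' → Dm m' ⊆ Dm m := by
      intro m m' h
      have hle : 1/(((N+m' : ℕ)):ℝ) ≤ 1/(((N+m : ℕ)):ℝ) := by
        apply one_div_le_one_div_of_le
        · push_cast; linarith [Nat.cast_nonneg (α := ℝ) m]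
        · exact_mod_cast Nat.add_le_add_left h N
      have hsubK : henigCone B (1/(((N+m' : ℕ)):ℝ)) ⊆ henigCone B (1/(((N+m : ℕ)):ℝ)) :=
        coneGen_mono (fun x hx => le_trans hx hle)
      exact Set.inter_subset_inter
        (Set.neg_subset_neg.2 (closure_mono hsubK)) (le_refl _)
    have hbadpt : ∀ m : ℕ, ∃ x, x ∈ A ∧ x ∈ Dm m := by
      intro m
      obtain ⟨x, ⟨hxA, hxK⟩, hxn⟩ := hcon (N + m) (Nat.le_add_right N m)
      have hcast2 : (2:ℝ) ≤ ((N+m : ℕ):ℝ) := by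
        push_cast
        linarith [hN2, Nat.cast_nonneg (α := ℝ) m]
      have hcastf : 4*‖f‖ ≤ ((N+m : ℕ):ℝ) := by
        push_cast
        have : (0:ℝ) ≤ (m:ℝ) := Nat.cast_nonneg m
        linarith [hNf]
      have hfle : f x ≤ -κ :=
        badpoint_f_le f hfu0 hBu hBf hBne hcast2 hcastf hxK hε0 hxn
      refine ⟨x, hxA, ⟨?_, hfle⟩⟩
      rw [Set.mem_neg]
      exact subset_closure (Set.mem_neg.1 hxK)
    have hFIP : ∀ s : Finset ℕ, ((j '' A) ∩ ⋂ i ∈ s, j '' (Dm i)).Nonempty := by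
      intro s
      set M := s.sup id with hM
      obtain ⟨x, hxA, hxD⟩ := hbadpt M
      refine ⟨j x, Set.mem_image_of_mem j hxA, ?_⟩
      rw [Set.mem_iInter₂]
      intro i hi
      exact Set.mem_image_of_mem j (hmono i M (Finset.le_sup (f := id) hi) hxD)
    obtain ⟨wpt, hwA, hwI⟩ := hcpt.inter_iInter_nonempty (fun m => j '' (Dm m))
      (fun m => isClosed_toWeakSpace_image (hDconv m) (hDcl m)) hFIP
    obtain ⟨x, hxA, rfl⟩ := hwA
    have hxD : ∀ m, x ∈ Dm m := by
      intro m
      have h1 : j x ∈ j '' (Dm m) := Set.mem_iInter.1 hwI m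
      exact ((toWeakSpace ℝ X).injective.mem_set_image).1 h1
    have hmxC : -x ∈ C := by
      apply mem_C_of_forall_mem_closure_henig hcone h0C hBC hBcl hBne f hfu0 hBu hBf hN2 hNf
      intro n hn
      have hm := (hxD (n - N)).1
      rw [Nat.add_sub_cancel' hn] at hm
      exact Set.mem_neg.1 hm
    have hx0 : x = 0 := by
      have hmem : x ∈ (A - ({0}:Set X)) ∩ (-C) :=
        ⟨⟨x, hxA, 0, rfl, sub_zero x⟩, Set.mem_neg.2 hmxC⟩
      rw [hmin.2] at hmem
      exact hmem
    have hfin := (hxD 0).2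
    rw [hx0] at hfin
    simp only [Set.mem_setOf_eq, map_zero] at hfin
    linarith
  obtain ⟨n, hnN, hincl⟩ := key
  have hcastn : (N:ℝ) ≤ (n:ℝ) := by exact_mod_cast hnN
  have hn0 : 0 < n := by
    have : (0:ℝ) < (n:ℝ) := by linarith
    exact_mod_cast this
  have hn0' : (0:ℝ) < (n:ℝ) := by linarith
  refine ⟨n, hn0, B, hbase, hbdd, ?_, ?_, ?_⟩
  · have h1 : 1/(n:ℝ) < 1/‖f‖ :=
      one_div_lt_one_div_of_lt hfnorm (lt_of_lt_of_le hNnorm hcastn)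
    refine lt_of_lt_of_le h1 ?_
    rw [deltaB]
    apply le_csInf (hBne.image _)
    rintro - ⟨b, hb, rfl⟩
    exact hBlow b hb
  · have hδ : 0 < 1/(n:ℝ) := by positivity
    have hun : u < (n:ℝ) := by linarith
    have hα1 : (1/(n:ℝ)) * u / 3 < 1 := by
      have h2 := mul_lt_mul_of_pos_left hun (inv_pos.2 hn0')
      rw [inv_mul_cancel₀ (ne_of_gt hn0')] at h2
      have heq : 1/(n:ℝ) * u / 3 = ((n:ℝ)⁻¹ * u)/3 := by rw [one_div]
      rw [heq]
      linarith
    have hsep := hssp ((1/(n:ℝ)) * u / 3) (by positivity) hα1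
    exact ssp_henig hcone hc₀ f hfu0 hf hδ hsep
  · rintro x ⟨hxA, hxK⟩
    refine ⟨hxA, ?_⟩
    rw [mem_closedBall, dist_zero_right]
    exact hincl x ⟨hxA, hxK⟩
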